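/- For every n ≥ 2 with n ≠ 4, the minimum of ν(A) + ν(B) − 2n over all mutually orthogonal pairs (A, B) of n×n normal matrices over R = {0, −1} equals 4n − 6 (in particular this minimum is attained). For n = 4 this minimum equals 8. -/

import Mathlib

/-- A matrix over `R = {0,-1} ⊆ ℤ` is normal: zero diagonal, entries `0` or `-1`. -/
def IsNormal {n : ℕ} (A : Matrix (Fin n) (Fin n) ℤ) : Prop :=
  (∀ i, A i i = 0) ∧ ∀ i j, A i j = 0 ∨ A i j = -1

/-- Tropical (max-plus) matrix product: `(A⊙B) i j = max_k (A i k + B k j)`. -/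
noncomputable def tropMul {n : ℕ} (A B : Matrix (Fin n) (Fin n) ℤ) :
    Matrix (Fin n) (Fin n) ℤ :=
  Matrix.of fun i j => sSup (Set.range fun k => A i k + B k j)

/-- Tropical sum: entrywise maximum. -/
def tropSum {n : ℕ} (A B : Matrix (Fin n) (Fin n) ℤ) : Matrix (Fin n) (Fin n) ℤ :=
  Matrix.of fun i j => max (A i j) (B i j)

/-- `nu A` is the number of zero entries of `A`. -/
def nu {n : ℕ} (A : Matrix (Fin n) (Fin n) ℤ) : ℕ :=
  (Finset.univ.filter (fun p : Fin n × Fin n => A p.1 p.2 = 0)).card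

open Finset

section Basics

lemma entry_nonpos {n : ℕ} {A : Matrix (Fin n) (Fin n) ℤ} (hA : IsNormal A)
    (i j : Fin n) : A i j ≤ 0 := by
  rcases hA.2 i j with h | h <;> omega

lemma orth_iff {n : ℕ} (hn : 0 < n) {A B : Matrix (Fin n) (Fin n) ℤ} (hA : IsNormal A)
    (hB : IsNormal B) :
    tropMul A B = 0 ↔ ∀ i j, ∃ k, A i k = 0 ∧ B k j = 0 := by
  have : Nonempty (Fin n) := ⟨⟨0, hn⟩⟩
  constructor
  · intro h i j
    have h0 : tropMul A B i j = 0 := by rw [h]; rfl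
    have hfin : (Set.range fun k => A i k + B k j).Finite := Set.finite_range _
    have hne : (Set.range fun k => A i k + B k j).Nonempty := Set.range_nonempty _
    have hmem := hne.csSup_mem hfin
    rw [show sSup (Set.range fun k => A i k + B k j) = tropMul A B i j from rfl, h0] at hmem
    obtain ⟨k, hk⟩ := hmem
    simp only at hk
    have h1 := entry_nonpos hA i k
    have h2 := entry_nonpos hB k j
    exact ⟨k, by omega, by omega⟩
  · intro h
    funext i j
    show sSup (Set.range fun k => A i k + B k j) = (0 : ℤ)
    obtain ⟨k, hk1, hk2⟩ := h i j
    apply le_antisymm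
    · apply csSup_le (Set.range_nonempty _)
      rintro x ⟨m, rfl⟩
      have h1 := entry_nonpos hA i m
      have h2 := entry_nonpos hB m j
      simp only
      omega
    · apply le_csSup ((Set.finite_range _).bddAbove)
      exact ⟨k, by simp [hk1, hk2]⟩

lemma nu_eq_sum {n : ℕ} (A : Matrix (Fin n) (Fin n) ℤ) :
    nu A = ∑ i : Fin n, (Finset.univ.filter fun j => A i j = 0).card := by
  unfold nu
  rw [Finset.card_filter, Fintype.sum_prod_type]
  exact Finset.sum_congr rfl fun i _ => (Finset.card_filter _ _).symm

lemma row_card {n : ℕ} (A : Matrix (Fin n) (Fin n) ℤ) (p q : Fin n) (hpq : p ≠ q)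
    (hA : ∀ i j, A i j = 0 ↔ (i = j ∨ i = p ∨ j = q)) (i : Fin n) :
    (Finset.univ.filter fun j => A i j = 0).card
      = if i = p then n else if i = q then 1 else 2 := by
  by_cases hip : i = p
  · rw [if_pos hip]
    have : (Finset.univ.filter fun j => A i j = 0) = Finset.univ :=
      Finset.filter_true_of_mem fun j _ => (hA i j).2 (Or.inr (Or.inl hip))
    rw [this, Finset.card_univ, Fintype.card_fin]
  · rw [if_neg hip]
    by_cases hiq : i = q
    · rw [if_pos hiq]
      have : (Finset.univ.filter fun j => A i j = 0) = {i} := by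
        ext j
        simp only [Finset.mem_filter, Finset.mem_univ, true_and, Finset.mem_singleton, hA]
        constructor
        · rintro (h | h | h)
          · exact h.symm
          · exact absurd h hip
          · rw [← hiq] at h; exact h
        · intro h; exact Or.inl h.symm
      rw [this, Finset.card_singleton]
    · rw [if_neg hiq]
      have : (Finset.univ.filter fun j => A i j = 0) = {i, q} := by
        ext j
        simp only [Finset.mem_filter, Finset.mem_univ, true_and, Finset.mem_insert,
          Finset.mem_singleton, hA]
        constructor
        · rintro (h | h | h)
          · exact Or.inl h.symm
          · exact absurd h hip
          · exact Or.inr h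
        · rintro (h | h)
          · exact Or.inl h.symm
          · exact Or.inr (Or.inr h)
      rw [this, Finset.card_insert_of_notMem (by simp [hiq]), Finset.card_singleton]

lemma constr_nu {n : ℕ} (hn : 2 ≤ n) (A : Matrix (Fin n) (Fin n) ℤ) (p q : Fin n)
    (hpq : p ≠ q) (hA : ∀ i j, A i j = 0 ↔ (i = j ∨ i = p ∨ j = q)) :
    nu A = 3*n - 3 := by
  rw [nu_eq_sum]
  rw [Finset.sum_congr rfl fun i _ => row_card A p q hpq hA i]
  rw [← Finset.add_sum_erase _ _ (Finset.mem_univ p), if_pos rfl]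
  have hq : q ∈ Finset.univ.erase p := Finset.mem_erase.2 ⟨fun h => hpq h.symm, Finset.mem_univ q⟩
  rw [← Finset.add_sum_erase _ _ hq, if_neg (fun h => hpq h.symm), if_pos rfl]
  have : ∀ i ∈ (Finset.univ.erase p).erase q,
      (if i = p then n else if i = q then 1 else 2) = 2 := by
    intro i hi
    simp only [Finset.mem_erase] at hi
    rw [if_neg hi.2.1, if_neg hi.1]
  rw [Finset.sum_congr rfl this, Finset.sum_const, smul_eq_mul]
  have hcard : ((Finset.univ.erase p).erase q).card = n - 2 := by
    rw [Finset.card_erase_of_mem hq, Finset.card_erase_of_mem (Finset.mem_univ p),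
      Finset.card_univ, Fintype.card_fin]
    omega
  rw [hcard]
  omega

end Basics

section Exist

lemma existence_gen {n : ℕ} (hn : 2 ≤ n) :
    ∃ A B : Matrix (Fin n) (Fin n) ℤ, IsNormal A ∧ IsNormal B ∧
      tropMul A B = 0 ∧ tropMul B A = 0 ∧ nu A + nu B = 6 * n - 6 := by
  have h0 : (0 : ℕ) < n := by omega
  set p : Fin n := ⟨0, by omega⟩ with hp
  set q : Fin n := ⟨1, by omega⟩ with hq
  have hpq : p ≠ q := by
    intro h
    have := congrArg Fin.val h
    simp [hp, hq] at this
  set A : Matrix (Fin n) (Fin n) ℤ :=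
    Matrix.of fun i j => if i = j ∨ i = p ∨ j = q then (0:ℤ) else -1 with hAdef
  set B : Matrix (Fin n) (Fin n) ℤ :=
    Matrix.of fun i j => if i = j ∨ i = q ∨ j = p then (0:ℤ) else -1 with hBdef
  have hAiff : ∀ i j, A i j = 0 ↔ (i = j ∨ i = p ∨ j = q) := by
    intro i j
    simp only [hAdef, Matrix.of_apply]
    split <;> simp_all
  have hBiff : ∀ i j, B i j = 0 ↔ (i = j ∨ i = q ∨ j = p) := by
    intro i j
    simp only [hBdef, Matrix.of_apply]
    split <;> simp_all
  have hAnorm : IsNormal A := by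
    constructor
    · intro i; exact (hAiff i i).2 (Or.inl rfl)
    · intro i j
      simp only [hAdef, Matrix.of_apply]
      split <;> simp
  have hBnorm : IsNormal B := by
    constructor
    · intro i; exact (hBiff i i).2 (Or.inl rfl)
    · intro i j
      simp only [hBdef, Matrix.of_apply]
      split <;> simp
  refine ⟨A, B, hAnorm, hBnorm, ?_, ?_, ?_⟩
  · rw [orth_iff h0 hAnorm hBnorm]
    intro i j
    exact ⟨q, (hAiff i q).2 (Or.inr (Or.inr rfl)), (hBiff q j).2 (Or.inr (Or.inl rfl))⟩
  · rw [orth_iff h0 hBnorm hAnorm]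
    intro i j
    exact ⟨p, (hBiff i p).2 (Or.inr (Or.inr rfl)), (hAiff p j).2 (Or.inr (Or.inl rfl))⟩
  · have h1 : nu A = 3*n - 3 := constr_nu hn A p q hpq hAiff
    have h2 : nu B = 3*n - 3 := constr_nu hn B q p (Ne.symm hpq) hBiff
    omega

lemma existence4 :
    ∃ A B : Matrix (Fin 4) (Fin 4) ℤ, IsNormal A ∧ IsNormal B ∧
      tropMul A B = 0 ∧ tropMul B A = 0 ∧ nu A + nu B = 16 := by
  set A : Matrix (Fin 4) (Fin 4) ℤ :=
    Matrix.of fun i j => if (i.val % 3 = 0) ↔ (j.val % 3 = 0) then (0:ℤ) else -1 with hA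
  set B : Matrix (Fin 4) (Fin 4) ℤ :=
    Matrix.of fun i j => if i.val % 2 = j.val % 2 then (0:ℤ) else -1 with hB
  have hAnorm : IsNormal A := by
    constructor
    · decide
    · simp only [hA, Matrix.of_apply]; decide
  have hBnorm : IsNormal B := by
    constructor
    · decide
    · simp only [hB, Matrix.of_apply]; decide
  refine ⟨A, B, hAnorm, hBnorm, ?_, ?_, ?_⟩
  · rw [orth_iff (by omega) hAnorm hBnorm]; simp only [hA, hB, Matrix.of_apply]; decide
  · rw [orth_iff (by omega) hBnorm hAnorm]; simp only [hA, hB, Matrix.of_apply]; decide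
  · show nu A + nu B = 16
    have h1 : nu A = 8 := by decide
    have h2 : nu B = 8 := by decide
    omega

end Exist

section Toolkit
variable {n : ℕ}

lemma sum_lower2 (f : Fin n → ℕ) (p q : Fin n) (hpq : p ≠ q) (a b c : ℕ)
    (hp : a ≤ f p) (hq : b ≤ f q) (h : ∀ i, i ≠ p → i ≠ q → c ≤ f i) :
    a + b + (n-2)*c ≤ ∑ i, f i := by
  have hqe : q ∈ univ.erase p := mem_erase.2 ⟨fun h => hpq h.symm, mem_univ q⟩
  rw [← Finset.add_sum_erase _ f (mem_univ p), ← Finset.add_sum_erase _ f hqe]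
  have hcard : ((univ.erase p).erase q).card = n - 2 := by
    rw [card_erase_of_mem hqe, card_erase_of_mem (mem_univ p), card_univ, Fintype.card_fin]
    omega
  have : (n-2)*c ≤ ∑ i ∈ (univ.erase p).erase q, f i := by
    calc (n-2)*c = ∑ _i ∈ (univ.erase p).erase q, c := by rw [sum_const, hcard, smul_eq_mul]
      _ ≤ _ := Finset.sum_le_sum fun i hi => by
          simp only [mem_erase] at hi
          exact h i hi.2.1 hi.1
  omega

lemma sum_lower1 (f : Fin n → ℕ) (p : Fin n) (a c : ℕ)
    (hp : a ≤ f p) (h : ∀ i, i ≠ p → c ≤ f i) :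
    a + (n-1)*c ≤ ∑ i, f i := by
  rw [← Finset.add_sum_erase _ f (mem_univ p)]
  have hcard : (univ.erase p).card = n - 1 := by
    rw [card_erase_of_mem (mem_univ p), card_univ, Fintype.card_fin]
  have : (n-1)*c ≤ ∑ i ∈ univ.erase p, f i := by
    calc (n-1)*c = ∑ _i ∈ univ.erase p, c := by rw [sum_const, hcard, smul_eq_mul]
      _ ≤ _ := Finset.sum_le_sum fun i hi => h i (mem_erase.1 hi).1
  omega

lemma sum_lower3 (f : Fin n → ℕ) (p q r : Fin n) (hpq : p ≠ q) (hpr : p ≠ r) (hqr : q ≠ r)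
    (a b c d : ℕ) (hp : a ≤ f p) (hq : b ≤ f q) (hr : c ≤ f r)
    (h : ∀ i, i ≠ p → i ≠ q → i ≠ r → d ≤ f i) :
    a + b + c + (n-3)*d ≤ ∑ i, f i := by
  have hqe : q ∈ univ.erase p := mem_erase.2 ⟨fun h => hpq h.symm, mem_univ q⟩
  have hre : r ∈ (univ.erase p).erase q :=
    mem_erase.2 ⟨fun h => hqr h.symm, mem_erase.2 ⟨fun h => hpr h.symm, mem_univ r⟩⟩
  rw [← Finset.add_sum_erase _ f (mem_univ p), ← Finset.add_sum_erase _ f hqe,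
    ← Finset.add_sum_erase _ f hre]
  have hcard : (((univ.erase p).erase q).erase r).card = n - 3 := by
    rw [card_erase_of_mem hre, card_erase_of_mem hqe, card_erase_of_mem (mem_univ p),
      card_univ, Fintype.card_fin]
    omega
  have : (n-3)*d ≤ ∑ i ∈ ((univ.erase p).erase q).erase r, f i := by
    calc (n-3)*d = ∑ _i ∈ ((univ.erase p).erase q).erase r, d := by
          rw [sum_const, hcard, smul_eq_mul]
      _ ≤ _ := Finset.sum_le_sum fun i hi => by
          simp only [mem_erase] at hi
          exact h i hi.2.2.1 hi.2.1 hi.1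
  omega

lemma sum_indicator (F : Finset (Fin n)) :
    ∑ i : Fin n, (if i ∈ F then 1 else 0) = F.card := by
  rw [Finset.sum_ite_mem, univ_inter, Finset.sum_const, smul_eq_mul, mul_one]

variable (Ra Rb : Fin n → Finset (Fin n))

def colOf (R : Fin n → Finset (Fin n)) (j : Fin n) : Finset (Fin n) :=
  univ.filter fun i => j ∈ R i

lemma sum_col_card (R : Fin n → Finset (Fin n)) :
    ∑ j, (colOf R j).card = ∑ i, (R i).card := by
  unfold colOf
  have h1 : ∀ j, (univ.filter fun i => j ∈ R i).card = ∑ i : Fin n, if j ∈ R i then 1 else 0 :=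
    fun j => card_filter _ _
  have h2 : ∀ i, (R i).card = ∑ j : Fin n, if j ∈ R i then 1 else 0 := by
    intro i
    rw [← card_filter, filter_mem_eq_inter, univ_inter]
  simp only [h1, h2]
  exact Finset.sum_comm

lemma col_loop (hra : ∀ i, i ∈ Ra i) (i : Fin n) : i ∈ colOf Ra i :=
  mem_filter.2 ⟨mem_univ i, hra i⟩

lemma col_cover (cover2 : ∀ i j, ∃ k, k ∈ Rb i ∧ j ∈ Ra k) :
    ∀ i j, ∃ k, k ∈ colOf Ra i ∧ j ∈ colOf Rb k := by
  intro i j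
  obtain ⟨k, hk1, hk2⟩ := cover2 j i
  exact ⟨k, mem_filter.2 ⟨mem_univ k, hk2⟩, mem_filter.2 ⟨mem_univ j, hk1⟩⟩

lemma row_union (cover1 : ∀ i j, ∃ k, k ∈ Ra i ∧ j ∈ Rb k) (i : Fin n) :
    Finset.univ ⊆ (Ra i).biUnion Rb := by
  intro j _
  obtain ⟨k, hk1, hk2⟩ := cover1 i j
  exact mem_biUnion.2 ⟨k, hk1, hk2⟩

lemma row_cover_sum (cover1 : ∀ i j, ∃ k, k ∈ Ra i ∧ j ∈ Rb k) (i : Fin n) :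
    n ≤ ∑ k ∈ Ra i, (Rb k).card := by
  calc n = (univ : Finset (Fin n)).card := by rw [card_univ, Fintype.card_fin]
    _ ≤ ((Ra i).biUnion Rb).card := card_le_card (row_union Ra Rb cover1 i)
    _ ≤ ∑ k ∈ Ra i, (Rb k).card := card_biUnion_le

lemma pair_cover (cover1 : ∀ i j, ∃ k, k ∈ Ra i ∧ j ∈ Rb k) (i e : Fin n)
    (h : Ra i = {i, e}) : Finset.univ ⊆ Rb i ∪ Rb e := by
  intro j _
  obtain ⟨k, hk1, hk2⟩ := cover1 i j
  rw [h, mem_insert, mem_singleton] at hk1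
  rcases hk1 with rfl | rfl
  · exact mem_union_left _ hk2
  · exact mem_union_right _ hk2

lemma pair_cover_card (cover1 : ∀ i j, ∃ k, k ∈ Ra i ∧ j ∈ Rb k) (i e : Fin n)
    (h : Ra i = {i, e}) : n ≤ (Rb i).card + (Rb e).card := by
  calc n = (univ : Finset (Fin n)).card := by rw [card_univ, Fintype.card_fin]
    _ ≤ (Rb i ∪ Rb e).card := card_le_card (pair_cover Ra Rb cover1 i e h)
    _ ≤ _ := card_union_le _ _

lemma pair_cover_compl (cover1 : ∀ i j, ∃ k, k ∈ Ra i ∧ j ∈ Rb k) (i e : Fin n)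
    (h : Ra i = {i, e}) : univ \ Rb i ⊆ Rb e := by
  intro j hj
  rw [mem_sdiff] at hj
  have := pair_cover Ra Rb cover1 i e h (mem_univ j)
  rw [mem_union] at this
  tauto

lemma row_two (i : Fin n) (hi : i ∈ Ra i) (h2 : (Ra i).card = 2) :
    ∃ e, e ≠ i ∧ Ra i = {i, e} := by
  obtain ⟨a, b, hab, hs⟩ := Finset.card_eq_two.1 h2
  rw [hs, mem_insert, mem_singleton] at hi
  rcases hi with rfl | rfl
  · exact ⟨b, fun h => hab h.symm, hs⟩
  · exact ⟨a, hab, by rw [hs]; exact Finset.pair_comm a i⟩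

lemma singleton_row_full'
    (hra : ∀ i, i ∈ Ra i)
    (cover1 : ∀ i j, ∃ k, k ∈ Ra i ∧ j ∈ Rb k)
    (i : Fin n) (h1 : (Ra i).card = 1) : Rb i = univ := by
  have hRai : Ra i = {i} := by
    obtain ⟨x, hx⟩ := Finset.card_eq_one.1 h1
    have hm := hra i
    rw [hx, Finset.mem_singleton] at hm
    rw [hx, ← hm]
  apply Finset.eq_univ_of_forall
  intro j
  obtain ⟨k, hk1, hk2⟩ := cover1 i j
  rw [hRai, Finset.mem_singleton] at hk1
  rwa [hk1] at hk2

/-- Two plain rows force hub structure in the rows of `Ra`. -/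
lemma two_plain_hub (hn : 5 ≤ n)
    (hra : ∀ i, i ∈ Ra i) (hrb : ∀ i, i ∈ Rb i)
    (cover1 : ∀ i j, ∃ k, k ∈ Ra i ∧ j ∈ Rb k)
    (cover2 : ∀ i j, ∃ k, k ∈ Rb i ∧ j ∈ Ra k)
    (i1 i2 : Fin n) (h12 : i1 ≠ i2)
    (ha1 : (Ra i1).card = 2) (hb1 : (Rb i1).card = 2)
    (ha2 : (Ra i2).card = 2) (hb2 : (Rb i2).card = 2) :
    (∃ p, n - 1 ≤ (Ra p).card) ∨
      (∃ p1 p2, p1 ≠ p2 ∧ n - 2 ≤ (Ra p1).card ∧ n - 2 ≤ (Ra p2).card) := by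
  obtain ⟨f1, hf1ne, hf1⟩ := row_two Rb i1 (hrb i1) hb1
  obtain ⟨f2, hf2ne, hf2⟩ := row_two Rb i2 (hrb i2) hb2
  have hcompl1 : univ \ Ra i1 ⊆ Ra f1 := pair_cover_compl Rb Ra cover2 i1 f1 hf1
  have hcompl2 : univ \ Ra i2 ⊆ Ra f2 := pair_cover_compl Rb Ra cover2 i2 f2 hf2
  have hcard1 : n - 2 ≤ (Ra f1).card := by
    calc n - 2 = (univ \ Ra i1).card := by
          rw [card_sdiff_of_subset (subset_univ _), card_univ, Fintype.card_fin, ha1]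
      _ ≤ _ := card_le_card hcompl1
  have hcard2 : n - 2 ≤ (Ra f2).card := by
    calc n - 2 = (univ \ Ra i2).card := by
          rw [card_sdiff_of_subset (subset_univ _), card_univ, Fintype.card_fin, ha2]
      _ ≤ _ := card_le_card hcompl2
  by_cases hee : Ra i1 = Ra i2
  · exfalso
    obtain ⟨e1, he1ne, he1⟩ := row_two Ra i1 (hra i1) ha1
    have hi2 : i2 ∈ Ra i1 := by rw [hee]; exact hra i2
    rw [he1, mem_insert, mem_singleton] at hi2
    rcases hi2 with h | h
    · exact h12 h.symm
    · subst h
      have hle := card_le_card (pair_cover Ra Rb cover1 i1 i2 he1)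
      rw [card_univ, Fintype.card_fin] at hle
      have := card_union_le (Rb i1) (Rb i2)
      omega
  by_cases hff : f1 = f2
  · left
    refine ⟨f1, ?_⟩
    have hsub : univ \ (Ra i1 ∩ Ra i2) ⊆ Ra f1 := by
      intro j hj
      rw [mem_sdiff, mem_inter] at hj
      rcases Decidable.not_and_iff_or_not.1 hj.2 with h | h
      · exact hcompl1 (mem_sdiff.2 ⟨mem_univ j, h⟩)
      · rw [hff]; exact hcompl2 (mem_sdiff.2 ⟨mem_univ j, h⟩)
    have hint : (Ra i1 ∩ Ra i2).card ≤ 1 := by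
      by_contra hgt
      push_neg at hgt
      have h1 : Ra i1 ∩ Ra i2 = Ra i1 :=
        eq_of_subset_of_card_le inter_subset_left (by omega)
      have h2 : Ra i1 ∩ Ra i2 = Ra i2 :=
        eq_of_subset_of_card_le inter_subset_right (by omega)
      exact hee (h1.symm.trans h2)
    calc n - 1 ≤ (univ \ (Ra i1 ∩ Ra i2)).card := by
          rw [card_sdiff_of_subset (subset_univ _), card_univ, Fintype.card_fin]
          omega
      _ ≤ _ := card_le_card hsub
  · right
    exact ⟨f1, f2, hff, hcard1, hcard2⟩

end Toolkit

section Hard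
variable {n : ℕ} (Ra Rb : Fin n → Finset (Fin n))

/-- a-singular case: some row of A is a singleton. -/
lemma caseI (hn : 5 ≤ n)
    (hra : ∀ i, i ∈ Ra i) (hrb : ∀ i, i ∈ Rb i)
    (cover1 : ∀ i j, ∃ k, k ∈ Ra i ∧ j ∈ Rb k)
    (cover2 : ∀ i j, ∃ k, k ∈ Rb i ∧ j ∈ Ra k)
    (hT : (∑ i, (Ra i).card) + ∑ i, (Rb i).card ≤ 6*n - 7)
    (i0 : Fin n) (hi0 : (Ra i0).card = 1)
    (hca : ∀ i, i ≠ i0 → 2 ≤ (Ra i).card)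
    (hcb : ∀ i, 2 ≤ (Rb i).card) : False := by
  have hRbi0 : Rb i0 = univ := singleton_row_full' Ra Rb hra cover1 i0 hi0
  have hcb0 : (Rb i0).card = n := by rw [hRbi0, card_univ, Fintype.card_fin]
  have hs1 : n + (n-1)*2 ≤ ∑ i, (Rb i).card :=
    sum_lower1 _ i0 n 2 (le_of_eq hcb0.symm) (fun i _ => hcb i)
  set F := univ.filter (fun i => (Ra i).card = 2) with hF
  set G := univ.filter (fun i => (Rb i).card = 2) with hG
  have hmemF : ∀ i, i ∈ F ↔ (Ra i).card = 2 := by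
    intro i; rw [hF, mem_filter]; simp
  have hmemG : ∀ i, i ∈ G ↔ (Rb i).card = 2 := by
    intro i; rw [hG, mem_filter]; simp
  have hclaim1 : 1 + (n-1)*3 ≤ (∑ i, (Ra i).card) + F.card := by
    have h := sum_lower1 (fun i => (Ra i).card + (if i ∈ F then 1 else 0)) i0 1 3 ?_ ?_
    · rw [Finset.sum_add_distrib, sum_indicator] at h
      exact h
    · show 1 ≤ (Ra i0).card + (if i0 ∈ F then 1 else 0)
      omega
    · intro i hi
      show 3 ≤ (Ra i).card + (if i ∈ F then 1 else 0)
      by_cases h2 : (Ra i).card = 2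
      · rw [if_pos ((hmemF i).2 h2)]; omega
      · have := hca i hi
        rcases Nat.lt_or_ge ((Ra i).card) 3 with h3 | h3
        · omega
        · omega
  have hclaim2 : n + (n-1)*3 ≤ (∑ i, (Rb i).card) + G.card := by
    have h := sum_lower1 (fun i => (Rb i).card + (if i ∈ G then 1 else 0)) i0 n 3 ?_ ?_
    · rw [Finset.sum_add_distrib, sum_indicator] at h
      exact h
    · show n ≤ (Rb i0).card + (if i0 ∈ G then 1 else 0)
      omega
    · intro i _
      show 3 ≤ (Rb i).card + (if i ∈ G then 1 else 0)
      by_cases h2 : (Rb i).card = 2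
      · rw [if_pos ((hmemG i).2 h2)]; omega
      · have := hcb i; omega
  have hFGsub : F ∪ G ⊆ univ.erase i0 := by
    intro i hi
    rw [mem_union] at hi
    refine mem_erase.2 ⟨?_, mem_univ i⟩
    rintro rfl
    rcases hi with h | h
    · rw [hmemF] at h; omega
    · rw [hmemG] at h; omega
  have hunion : (F ∪ G).card ≤ n - 1 := by
    have := card_le_card hFGsub
    rwa [card_erase_of_mem (mem_univ i0), card_univ, Fintype.card_fin] at this
  have hcui : (F ∪ G).card + (F ∩ G).card = F.card + G.card := card_union_add_card_inter F G
  have hP2 : 2 ≤ (F ∩ G).card := by omega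
  obtain ⟨i1, hi1, i2, hi2, h12⟩ := Finset.one_lt_card.1 hP2
  rw [mem_inter, hmemF, hmemG] at hi1 hi2
  rcases two_plain_hub Ra Rb hn hra hrb cover1 cover2 i1 i2 h12 hi1.1 hi1.2 hi2.1 hi2.2 with
    ⟨p, hp⟩ | ⟨p1, p2, hpp, hp1, hp2⟩
  · have hpne : p ≠ i0 := by rintro rfl; omega
    have h : (n-1) + 1 + (n-2)*2 ≤ ∑ i, (Ra i).card :=
      sum_lower2 _ p i0 hpne (n-1) 1 2 hp (by show 1 ≤ (Ra i0).card; omega)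
        (fun i hip hii0 => hca i hii0)
    omega
  · have hp1ne : p1 ≠ i0 := by rintro rfl; omega
    have hp2ne : p2 ≠ i0 := by rintro rfl; omega
    have h : (n-2) + (n-2) + 1 + (n-3)*2 ≤ ∑ i, (Ra i).card :=
      sum_lower3 _ p1 p2 i0 hpp hp1ne hp2ne
        (n-2) (n-2) 1 2 hp1 hp2 (by show 1 ≤ (Ra i0).card; omega)
        (fun i h1 h2 h3 => hca i h3)
    omega

/-- main case: all rows of both relations have at least 2 elements. -/
lemma caseIII (hn : 5 ≤ n)
    (hra : ∀ i, i ∈ Ra i) (hrb : ∀ i, i ∈ Rb i)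
    (cover1 : ∀ i j, ∃ k, k ∈ Ra i ∧ j ∈ Rb k)
    (cover2 : ∀ i j, ∃ k, k ∈ Rb i ∧ j ∈ Ra k)
    (hT : (∑ i, (Ra i).card) + ∑ i, (Rb i).card ≤ 6*n - 7)
    (hrs : (∑ i, (Ra i).card) ≤ ∑ i, (Rb i).card)
    (hca : ∀ i, 2 ≤ (Ra i).card)
    (hcb : ∀ i, 2 ≤ (Rb i).card) : False := by
  have h0 : (0:ℕ) < n := by omega
  set F := univ.filter (fun i => (Ra i).card = 2) with hF
  set G := univ.filter (fun i => (Rb i).card = 2) with hG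
  have hmemF : ∀ i, i ∈ F ↔ (Ra i).card = 2 := by
    intro i; rw [hF, mem_filter]; simp
  have hmemG : ∀ i, i ∈ G ↔ (Rb i).card = 2 := by
    intro i; rw [hG, mem_filter]; simp
  have hcui : (F ∪ G).card + (F ∩ G).card = F.card + G.card := card_union_add_card_inter F G
  have hunion : (F ∪ G).card ≤ n := by
    have := card_le_card (subset_univ (F ∪ G))
    rwa [card_univ, Fintype.card_fin] at this
  -- the two-plain machinery
  have main2 : 2 ≤ (F ∩ G).card → False := by
    intro hP2
    obtain ⟨i1, hi1, i2, hi2, h12⟩ := Finset.one_lt_card.1 hP2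
    rw [mem_inter, hmemF, hmemG] at hi1 hi2
    have hrside : 3*n - 3 ≤ ∑ i, (Ra i).card := by
      rcases two_plain_hub Ra Rb hn hra hrb cover1 cover2 i1 i2 h12 hi1.1 hi1.2 hi2.1 hi2.2 with
        ⟨p, hp⟩ | ⟨p1, p2, hpp, hp1, hp2⟩
      · have h : (n-1) + (n-1)*2 ≤ ∑ i, (Ra i).card :=
          sum_lower1 _ p (n-1) 2 hp (fun i _ => hca i)
        omega
      · have h : (n-2) + (n-2) + (n-2)*2 ≤ ∑ i, (Ra i).card :=
          sum_lower2 _ p1 p2 hpp (n-2) (n-2) 2 hp1 hp2 (fun i _ _ => hca i)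
        omega
    have hsside : 3*n - 3 ≤ ∑ i, (Rb i).card := by
      rcases two_plain_hub Rb Ra hn hrb hra cover2 cover1 i1 i2 h12 hi1.2 hi1.1 hi2.2 hi2.1 with
        ⟨p, hp⟩ | ⟨p1, p2, hpp, hp1, hp2⟩
      · have h : (n-1) + (n-1)*2 ≤ ∑ i, (Rb i).card :=
          sum_lower1 _ p (n-1) 2 hp (fun i _ => hcb i)
        omega
      · have h : (n-2) + (n-2) + (n-2)*2 ≤ ∑ i, (Rb i).card :=
          sum_lower2 _ p1 p2 hpp (n-2) (n-2) 2 hp1 hp2 (fun i _ _ => hcb i)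
        omega
    omega
  -- one plain row forces a second one
  have main1 : 1 ≤ (F ∩ G).card → False := by
    intro hP1
    rcases Nat.lt_or_ge ((F ∩ G).card) 2 with hlt | hge
    swap
    · exact main2 hge
    obtain ⟨i1, hi1⟩ := Finset.card_pos.1 (by omega : 0 < (F ∩ G).card)
    rw [mem_inter, hmemF, hmemG] at hi1
    obtain ⟨e, hene, he⟩ := row_two Ra i1 (hra i1) hi1.1
    obtain ⟨f, hfne, hf⟩ := row_two Rb i1 (hrb i1) hi1.2
    have hhubA : n - 2 ≤ (Ra f).card := by
      have hcompl : univ \ Ra i1 ⊆ Ra f := pair_cover_compl Rb Ra cover2 i1 f hf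
      calc n - 2 = (univ \ Ra i1).card := by
            rw [card_sdiff_of_subset (subset_univ _), card_univ, Fintype.card_fin, hi1.1]
        _ ≤ _ := card_le_card hcompl
    have hhubB : n - 2 ≤ (Rb e).card := by
      have hcompl : univ \ Rb i1 ⊆ Rb e := pair_cover_compl Ra Rb cover1 i1 e he
      calc n - 2 = (univ \ Rb i1).card := by
            rw [card_sdiff_of_subset (subset_univ _), card_univ, Fintype.card_fin, hi1.2]
        _ ≤ _ := card_le_card hcompl
    have hclaim1 : (n-2) + (n-1)*3 ≤ (∑ i, (Ra i).card) + F.card := by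
      have h := sum_lower1 (fun i => (Ra i).card + (if i ∈ F then 1 else 0)) f (n-2) 3 ?_ ?_
      · rw [Finset.sum_add_distrib, sum_indicator] at h
        exact h
      · show n - 2 ≤ (Ra f).card + (if f ∈ F then 1 else 0)
        have := hhubA; omega
      · intro i _
        show 3 ≤ (Ra i).card + (if i ∈ F then 1 else 0)
        by_cases h2 : (Ra i).card = 2
        · rw [if_pos ((hmemF i).2 h2)]; omega
        · have := hca i; omega
    have hclaim2 : (n-2) + (n-1)*3 ≤ (∑ i, (Rb i).card) + G.card := by
      have h := sum_lower1 (fun i => (Rb i).card + (if i ∈ G then 1 else 0)) e (n-2) 3 ?_ ?_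
      · rw [Finset.sum_add_distrib, sum_indicator] at h
        exact h
      · show n - 2 ≤ (Rb e).card + (if e ∈ G then 1 else 0)
        have := hhubB; omega
      · intro i _
        show 3 ≤ (Rb i).card + (if i ∈ G then 1 else 0)
        by_cases h2 : (Rb i).card = 2
        · rw [if_pos ((hmemG i).2 h2)]; omega
        · have := hcb i; omega
    omega
  -- now plain = 0
  have hP0 : (F ∩ G).card = 0 := by
    rcases Nat.eq_zero_or_pos ((F ∩ G).card) with h | h
    · exact h
    · exact absurd (main1 h) (fun h => h)
  have hED : Disjoint F G := by
    rw [Finset.disjoint_iff_inter_eq_empty, ← Finset.card_eq_zero]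
    exact hP0
  -- maxima
  have hne : (univ : Finset (Fin n)).Nonempty := ⟨⟨0, h0⟩, mem_univ _⟩
  obtain ⟨p, _, hp⟩ := Finset.exists_max_image univ (fun i => (Ra i).card) hne
  obtain ⟨q, _, hq⟩ := Finset.exists_max_image univ (fun i => (Rb i).card) hne
  by_cases hU2 : (Ra p).card = 2
  · -- all rows of A have card 2
    have hall : ∀ i, (Ra i).card = 2 := fun i => le_antisymm (by
        have := hp i (mem_univ i); omega) (hca i)
    have hr2 : (∑ i, (Ra i).card) = 2*n := by
      rw [Finset.sum_congr rfl (fun i _ => hall i), Finset.sum_const, card_univ,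
        Fintype.card_fin, smul_eq_mul, mul_comm]
    have hcb3 : ∀ i, 3 ≤ (Rb i).card := by
      intro i
      have hiF : i ∈ F := (hmemF i).2 (hall i)
      have hiG : i ∉ G := fun hiG => (Finset.disjoint_left.1 hED) hiF hiG
      rw [hmemG] at hiG
      have := hcb i
      omega
    have hs3 : 3*n ≤ ∑ i, (Rb i).card := by
      calc 3*n = ∑ _i : Fin n, 3 := by
            rw [Finset.sum_const, card_univ, Fintype.card_fin, smul_eq_mul, mul_comm]
        _ ≤ _ := Finset.sum_le_sum fun i _ => hcb3 i
    have hsq : n*n ≤ 2 * ∑ i, (Rb i).card := by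
      have hper : ∀ i, n ≤ 2 * (Rb i).card := by
        intro i
        have h1 : n ≤ ∑ k ∈ Rb i, (Ra k).card := row_cover_sum Rb Ra cover2 i
        have h2 : (∑ k ∈ Rb i, (Ra k).card) = 2 * (Rb i).card := by
          rw [Finset.sum_congr rfl (fun k _ => hall k), Finset.sum_const, smul_eq_mul, mul_comm]
        omega
      calc n*n = ∑ _i : Fin n, n := by
            rw [Finset.sum_const, card_univ, Fintype.card_fin, smul_eq_mul, mul_comm]
        _ ≤ ∑ i : Fin n, 2 * (Rb i).card := Finset.sum_le_sum fun i _ => hper i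
        _ = 2 * ∑ i, (Rb i).card := by rw [Finset.mul_sum]
    -- contradiction: s ≤ 4n-7 (from hT, r = 2n), s ≥ 3n gives n ≥ 7; n² ≤ 2s ≤ 8n-14
    have hs7 : (∑ i, (Rb i).card) ≤ 4*n - 7 := by omega
    have hn7 : 7 ≤ n := by omega
    have : 7*n ≤ n*n := Nat.mul_le_mul_right n hn7
    have hn14 : 14 ≤ n := by omega
    have : 14*n ≤ n*n := Nat.mul_le_mul_right n hn14
    omega
  by_cases hX2 : (Rb q).card = 2
  · -- all rows of B have card 2: r ≥ 3n > 2n = s, contradicting r ≤ s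
    have hall : ∀ i, (Rb i).card = 2 := fun i => le_antisymm (by
        have := hq i (mem_univ i); omega) (hcb i)
    have hs2 : (∑ i, (Rb i).card) = 2*n := by
      rw [Finset.sum_congr rfl (fun i _ => hall i), Finset.sum_const, card_univ,
        Fintype.card_fin, smul_eq_mul, mul_comm]
    have hca3 : ∀ i, 3 ≤ (Ra i).card := by
      intro i
      have hiG : i ∈ G := (hmemG i).2 (hall i)
      have hiF : i ∉ F := fun hiF => (Finset.disjoint_left.1 hED) hiF hiG
      rw [hmemF] at hiF
      have := hca i
      omega
    have hr3 : 3*n ≤ ∑ i, (Ra i).card := by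
      calc 3*n = ∑ _i : Fin n, 3 := by
            rw [Finset.sum_const, card_univ, Fintype.card_fin, smul_eq_mul, mul_comm]
        _ ≤ _ := Finset.sum_le_sum fun i _ => hca3 i
    omega
  -- both maxima ≥ 3
  have hU3 : 3 ≤ (Ra p).card := by have := hca p; omega
  have hX3 : 3 ≤ (Rb q).card := by have := hcb q; omega
  have hclaim1 : (Ra p).card + (n-1)*3 ≤ (∑ i, (Ra i).card) + F.card := by
    have h := sum_lower1 (fun i => (Ra i).card + (if i ∈ F then 1 else 0)) p ((Ra p).card) 3 ?_ ?_
    · rw [Finset.sum_add_distrib, sum_indicator] at h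
      exact h
    · show (Ra p).card ≤ (Ra p).card + (if p ∈ F then 1 else 0)
      omega
    · intro i _
      show 3 ≤ (Ra i).card + (if i ∈ F then 1 else 0)
      by_cases h2 : (Ra i).card = 2
      · rw [if_pos ((hmemF i).2 h2)]; omega
      · have := hca i; omega
  have hclaim2 : (Rb q).card + (n-1)*3 ≤ (∑ i, (Rb i).card) + G.card := by
    have h := sum_lower1 (fun i => (Rb i).card + (if i ∈ G then 1 else 0)) q ((Rb q).card) 3 ?_ ?_
    · rw [Finset.sum_add_distrib, sum_indicator] at h
      exact h
    · show (Rb q).card ≤ (Rb q).card + (if q ∈ G then 1 else 0)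
      omega
    · intro i _
      show 3 ≤ (Rb i).card + (if i ∈ G then 1 else 0)
      by_cases h2 : (Rb i).card = 2
      · rw [if_pos ((hmemG i).2 h2)]; omega
      · have := hcb i; omega
  -- U + X ≤ T + n - 6(n-1) ≤ n - 1
  have hUX : (Ra p).card + (Rb q).card ≤ n - 1 := by omega
  -- hence U, X ≤ n - 4
  have hU : (Ra p).card ≤ n - 4 := by omega
  have hX : (Rb q).card ≤ n - 4 := by omega
  -- per-row bound
  have hrow : ∀ i, i ≠ p → i ≠ q → 6 ≤ (Ra i).card + (Rb i).card := by
    intro i _ _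
    by_cases h2 : (Ra i).card = 2
    · obtain ⟨e, hene, he⟩ := row_two Ra i (hra i) h2
      have := pair_cover_card Ra Rb cover1 i e he
      have := hq e (mem_univ e)
      omega
    · by_cases h2' : (Rb i).card = 2
      · obtain ⟨f, hfne, hf⟩ := row_two Rb i (hrb i) h2'
        have := pair_cover_card Rb Ra cover2 i f hf
        have := hp f (mem_univ f)
        have := hca i
        omega
      · have := hca i
        have := hcb i
        omega
  by_cases hpq : p = q
  · subst hpq
    have h := sum_lower1 (fun i => (Ra i).card + (Rb i).card) p
      ((Ra p).card + (Rb p).card) 6 (le_refl _) (fun i hi => hrow i hi hi)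
    rw [Finset.sum_add_distrib] at h
    omega
  · have h := sum_lower2 (fun i => (Ra i).card + (Rb i).card) p q hpq
      ((Ra p).card + 2) ((Rb q).card + 2) 6
      (by show (Ra p).card + 2 ≤ (Ra p).card + (Rb p).card; have := hcb p; omega)
      (by show (Rb q).card + 2 ≤ (Ra q).card + (Rb q).card; have := hca q; omega)
      hrow
    rw [Finset.sum_add_distrib] at h
    omega

lemma sing_pair (hra : ∀ i, i ∈ Ra i) (hrb : ∀ i, i ∈ Rb i)
    (cover1 : ∀ i j, ∃ k, k ∈ Ra i ∧ j ∈ Rb k)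
    (cover2 : ∀ i j, ∃ k, k ∈ Rb i ∧ j ∈ Ra k)
    (i : Fin n) (h : (Ra i).card = 1 ∨ (Rb i).card = 1) :
    (Ra i).card + (Rb i).card = n + 1 := by
  rcases h with h | h
  · have : Rb i = univ := singleton_row_full' Ra Rb hra cover1 i h
    rw [h, this, card_univ, Fintype.card_fin]
    omega
  · have : Ra i = univ := singleton_row_full' Rb Ra hrb cover2 i h
    rw [h, this, card_univ, Fintype.card_fin]

lemma sing_unique (hn : 5 ≤ n)
    (hra : ∀ i, i ∈ Ra i) (hrb : ∀ i, i ∈ Rb i)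
    (cover1 : ∀ i j, ∃ k, k ∈ Ra i ∧ j ∈ Rb k)
    (cover2 : ∀ i j, ∃ k, k ∈ Rb i ∧ j ∈ Ra k)
    (hT : (∑ i, (Ra i).card) + ∑ i, (Rb i).card ≤ 6*n - 7)
    (i j : Fin n) (hij : i ≠ j)
    (hi : (Ra i).card = 1 ∨ (Rb i).card = 1)
    (hj : (Ra j).card = 1 ∨ (Rb j).card = 1) : False := by
  have hvi := sing_pair Ra Rb hra hrb cover1 cover2 i hi
  have hvj := sing_pair Ra Rb hra hrb cover1 cover2 j hj
  have h := sum_lower2 (fun k => (Ra k).card + (Rb k).card) i j hij (n+1) (n+1) 4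
    (le_of_eq hvi.symm) (le_of_eq hvj.symm) ?_
  · rw [Finset.sum_add_distrib] at h
    omega
  · intro k _ _
    show 4 ≤ (Ra k).card + (Rb k).card
    by_cases hk : (Ra k).card = 1 ∨ (Rb k).card = 1
    · have := sing_pair Ra Rb hra hrb cover1 cover2 k hk
      omega
    · push_neg at hk
      have h1 : 1 ≤ (Ra k).card := Finset.card_pos.2 ⟨k, hra k⟩
      have h2 : 1 ≤ (Rb k).card := Finset.card_pos.2 ⟨k, hrb k⟩
      omega

lemma hard_aux (hn : 5 ≤ n)
    (hra : ∀ i, i ∈ Ra i) (hrb : ∀ i, i ∈ Rb i)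
    (cover1 : ∀ i j, ∃ k, k ∈ Ra i ∧ j ∈ Rb k)
    (cover2 : ∀ i j, ∃ k, k ∈ Rb i ∧ j ∈ Ra k)
    (hrs : (∑ i, (Ra i).card) ≤ ∑ i, (Rb i).card)
    (hT : (∑ i, (Ra i).card) + ∑ i, (Rb i).card ≤ 6*n - 7) : False := by
  -- column structures
  have hraC : ∀ j, j ∈ colOf Ra j := col_loop Ra hra
  have hrbC : ∀ j, j ∈ colOf Rb j := col_loop Rb hrb
  have cover1C : ∀ i j, ∃ k, k ∈ colOf Ra i ∧ j ∈ colOf Rb k := col_cover Ra Rb cover2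
  have cover2C : ∀ i j, ∃ k, k ∈ colOf Rb i ∧ j ∈ colOf Ra k := col_cover Rb Ra cover1
  have hTC : (∑ j, (colOf Ra j).card) + ∑ j, (colOf Rb j).card ≤ 6*n - 7 := by
    rw [sum_col_card, sum_col_card]; exact hT
  -- kill (Rb i).card = 1
  have hcb : ∀ i, 2 ≤ (Rb i).card := by
    intro i
    by_contra hlt
    push_neg at hlt
    have h1 : (Rb i).card = 1 := by
      have := Finset.card_pos.2 ⟨i, hrb i⟩
      omega
    have hRai : Ra i = univ := singleton_row_full' Rb Ra hrb cover2 i h1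
    have hcai : (Ra i).card = n := by rw [hRai, card_univ, Fintype.card_fin]
    have hothers : ∀ j, j ≠ i → 2 ≤ (Ra j).card := by
      intro j hj
      by_contra hlt2
      push_neg at hlt2
      have h2 : (Ra j).card = 1 := by
        have := Finset.card_pos.2 ⟨j, hra j⟩
        omega
      exact sing_unique Ra Rb hn hra hrb cover1 cover2 hT j i hj (Or.inl h2) (Or.inr h1)
    have h : n + (n-1)*2 ≤ ∑ k, (Ra k).card :=
      sum_lower1 _ i n 2 (le_of_eq hcai.symm) hothers
    omega
  -- kill (colOf Rb j).card = 1
  have hcbC : ∀ j, 2 ≤ (colOf Rb j).card := by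
    intro j
    by_contra hlt
    push_neg at hlt
    have h1 : (colOf Rb j).card = 1 := by
      have := Finset.card_pos.2 ⟨j, hrbC j⟩
      omega
    have hCaj : colOf Ra j = univ := singleton_row_full' (colOf Rb) (colOf Ra) hrbC cover2C j h1
    have hcaj : (colOf Ra j).card = n := by rw [hCaj, card_univ, Fintype.card_fin]
    have hothers : ∀ k, k ≠ j → 2 ≤ (colOf Ra k).card := by
      intro k hk
      by_contra hlt2
      push_neg at hlt2
      have h2 : (colOf Ra k).card = 1 := by
        have := Finset.card_pos.2 ⟨k, hraC k⟩
        omega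
      exact sing_unique (colOf Ra) (colOf Rb) hn hraC hrbC cover1C cover2C hTC k j hk
        (Or.inl h2) (Or.inr h1)
    have h : n + (n-1)*2 ≤ ∑ k, (colOf Ra k).card :=
      sum_lower1 _ j n 2 (le_of_eq hcaj.symm) hothers
    rw [sum_col_card] at h
    omega
  -- case: a-singular row
  by_cases hA : ∃ i0, (Ra i0).card = 1
  · obtain ⟨i0, hi0⟩ := hA
    have hothers : ∀ i, i ≠ i0 → 2 ≤ (Ra i).card := by
      intro i hi
      by_contra hlt
      push_neg at hlt
      have h2 : (Ra i).card = 1 := by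
        have := Finset.card_pos.2 ⟨i, hra i⟩
        omega
      exact sing_unique Ra Rb hn hra hrb cover1 cover2 hT i i0 hi (Or.inl h2) (Or.inl hi0)
    exact caseI Ra Rb hn hra hrb cover1 cover2 hT i0 hi0 hothers hcb
  -- case: d-singular column
  by_cases hD : ∃ j0, (colOf Ra j0).card = 1
  · obtain ⟨j0, hj0⟩ := hD
    have hothers : ∀ j, j ≠ j0 → 2 ≤ (colOf Ra j).card := by
      intro j hj
      by_contra hlt
      push_neg at hlt
      have h2 : (colOf Ra j).card = 1 := by
        have := Finset.card_pos.2 ⟨j, hraC j⟩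
        omega
      exact sing_unique (colOf Ra) (colOf Rb) hn hraC hrbC cover1C cover2C hTC j j0 hj
        (Or.inl h2) (Or.inl hj0)
    exact caseI (colOf Ra) (colOf Rb) hn hraC hrbC cover1C cover2C hTC j0 hj0 hothers hcbC
  -- main case
  push_neg at hA
  have hca : ∀ i, 2 ≤ (Ra i).card := by
    intro i
    have h1 : 1 ≤ (Ra i).card := Finset.card_pos.2 ⟨i, hra i⟩
    have := hA i
    omega
  exact caseIII Ra Rb hn hra hrb cover1 cover2 hT hrs hca hcb

lemma hard_bound' (hn : 5 ≤ n)
    (hra : ∀ i, i ∈ Ra i) (hrb : ∀ i, i ∈ Rb i)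
    (cover1 : ∀ i j, ∃ k, k ∈ Ra i ∧ j ∈ Rb k)
    (cover2 : ∀ i j, ∃ k, k ∈ Rb i ∧ j ∈ Ra k) :
    6 * n - 6 ≤ (∑ i, (Ra i).card) + ∑ i, (Rb i).card := by
  by_contra hlt
  push_neg at hlt
  have hT : (∑ i, (Ra i).card) + ∑ i, (Rb i).card ≤ 6*n - 7 := by omega
  rcases le_total (∑ i, (Ra i).card) (∑ i, (Rb i).card) with h | h
  · exact hard_aux Ra Rb hn hra hrb cover1 cover2 h hT
  · exact hard_aux Rb Ra hn hrb hra cover2 cover1 h (by omega)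

end Hard

section Abstract
variable {n : ℕ} (Ra Rb : Fin n → Finset (Fin n))

/-- If row i of A has only the diagonal zero, then row i of B is full. -/
lemma singleton_row_full
    (hra : ∀ i, i ∈ Ra i)
    (cover1 : ∀ i j, ∃ k, k ∈ Ra i ∧ j ∈ Rb k)
    (i : Fin n) (h1 : (Ra i).card = 1) : Rb i = univ := by
  have hRai : Ra i = {i} := by
    obtain ⟨x, hx⟩ := Finset.card_eq_one.1 h1
    have hm := hra i
    rw [hx, Finset.mem_singleton] at hm
    rw [hx, ← hm]
  apply Finset.eq_univ_of_forall
  intro j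
  obtain ⟨k, hk1, hk2⟩ := cover1 i j
  rw [hRai, Finset.mem_singleton] at hk1
  rwa [hk1] at hk2

lemma easy_bound (hn : 2 ≤ n)
    (hra : ∀ i, i ∈ Ra i) (hrb : ∀ i, i ∈ Rb i)
    (cover1 : ∀ i j, ∃ k, k ∈ Ra i ∧ j ∈ Rb k)
    (cover2 : ∀ i j, ∃ k, k ∈ Rb i ∧ j ∈ Ra k) :
    n * min 4 (n+1) ≤ (∑ i, (Ra i).card) + ∑ i, (Rb i).card := by
  have key : ∀ i, min 4 (n+1) ≤ (Ra i).card + (Rb i).card := by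
    intro i
    have ha1 : 1 ≤ (Ra i).card := Finset.card_pos.2 ⟨i, hra i⟩
    have hb1 : 1 ≤ (Rb i).card := Finset.card_pos.2 ⟨i, hrb i⟩
    rcases Nat.lt_or_ge (Ra i).card 2 with h | h
    · have : (Ra i).card = 1 := by omega
      have := singleton_row_full Ra Rb hra cover1 i this
      have : (Rb i).card = n := by rw [this, Finset.card_univ, Fintype.card_fin]
      omega
    · rcases Nat.lt_or_ge (Rb i).card 2 with h' | h'
      · have : (Rb i).card = 1 := by omega
        have := singleton_row_full Rb Ra hrb cover2 i this
        have : (Ra i).card = n := by rw [this, Finset.card_univ, Fintype.card_fin]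
        omega
      · omega
  calc n * min 4 (n+1) = ∑ _i : Fin n, min 4 (n+1) := by
        rw [Finset.sum_const, Finset.card_univ, Fintype.card_fin, smul_eq_mul]
    _ ≤ ∑ i, ((Ra i).card + (Rb i).card) := Finset.sum_le_sum fun i _ => key i
    _ = (∑ i, (Ra i).card) + ∑ i, (Rb i).card := Finset.sum_add_distrib

/-- The hard lower bound for `n ≥ 5`. -/
lemma hard_bound (hn : 5 ≤ n)
    (hra : ∀ i, i ∈ Ra i) (hrb : ∀ i, i ∈ Rb i)
    (cover1 : ∀ i j, ∃ k, k ∈ Ra i ∧ j ∈ Rb k)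
    (cover2 : ∀ i j, ∃ k, k ∈ Rb i ∧ j ∈ Ra k) :
    6 * n - 6 ≤ (∑ i, (Ra i).card) + ∑ i, (Rb i).card :=
  hard_bound' Ra Rb hn hra hrb cover1 cover2

end Abstract

section Glue

lemma lower_bound_main {n : ℕ} (hn : 2 ≤ n) {A B : Matrix (Fin n) (Fin n) ℤ}
    (hA : IsNormal A) (hB : IsNormal B)
    (h1 : tropMul A B = 0) (h2 : tropMul B A = 0) :
    (if n = 4 then 16 else 6 * n - 6) ≤ nu A + nu B := by
  have h0 : 0 < n := by omega
  have hAB := (orth_iff h0 hA hB).1 h1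
  have hBA := (orth_iff h0 hB hA).1 h2
  set Ra : Fin n → Finset (Fin n) := fun i => Finset.univ.filter fun j => A i j = 0 with hRa
  set Rb : Fin n → Finset (Fin n) := fun i => Finset.univ.filter fun j => B i j = 0 with hRb
  have hra : ∀ i, i ∈ Ra i := fun i => Finset.mem_filter.2 ⟨Finset.mem_univ i, hA.1 i⟩
  have hrb : ∀ i, i ∈ Rb i := fun i => Finset.mem_filter.2 ⟨Finset.mem_univ i, hB.1 i⟩
  have c1 : ∀ i j, ∃ k, k ∈ Ra i ∧ j ∈ Rb k := by
    intro i j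
    obtain ⟨k, hk1, hk2⟩ := hAB i j
    exact ⟨k, Finset.mem_filter.2 ⟨Finset.mem_univ _, hk1⟩,
      Finset.mem_filter.2 ⟨Finset.mem_univ _, hk2⟩⟩
  have c2 : ∀ i j, ∃ k, k ∈ Rb i ∧ j ∈ Ra k := by
    intro i j
    obtain ⟨k, hk1, hk2⟩ := hBA i j
    exact ⟨k, Finset.mem_filter.2 ⟨Finset.mem_univ _, hk1⟩,
      Finset.mem_filter.2 ⟨Finset.mem_univ _, hk2⟩⟩
  have hsum : nu A + nu B = (∑ i, (Ra i).card) + ∑ i, (Rb i).card := by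
    rw [nu_eq_sum A, nu_eq_sum B]
  rw [hsum]
  by_cases h4 : n = 4
  · rw [if_pos h4]
    subst h4
    have := easy_bound Ra Rb (by omega) hra hrb c1 c2
    simpa using this
  · rw [if_neg h4]
    rcases Nat.lt_or_ge n 5 with h5 | h5
    · -- n = 2 or 3
      have := easy_bound Ra Rb hn hra hrb c1 c2
      interval_cases n <;> simp_all <;> omega
    · exact hard_bound Ra Rb h5 hra hrb c1 c2

end Glue

theorem stmt_11 (n : ℕ) (hn : 2 ≤ n) :
    (n ≠ 4 →
      (∃ A B : Matrix (Fin n) (Fin n) ℤ, IsNormal A ∧ IsNormal B ∧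
        tropMul A B = 0 ∧ tropMul B A = 0 ∧ nu A + nu B = 4 * n - 6 + 2 * n) ∧
      (∀ A B : Matrix (Fin n) (Fin n) ℤ, IsNormal A → IsNormal B →
        tropMul A B = 0 → tropMul B A = 0 → 4 * n - 6 + 2 * n ≤ nu A + nu B)) ∧
    (n = 4 →
      (∃ A B : Matrix (Fin n) (Fin n) ℤ, IsNormal A ∧ IsNormal B ∧
        tropMul A B = 0 ∧ tropMul B A = 0 ∧ nu A + nu B = 8 + 2 * n) ∧
      (∀ A B : Matrix (Fin n) (Fin n) ℤ, IsNormal A → IsNormal B →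
        tropMul A B = 0 → tropMul B A = 0 → 8 + 2 * n ≤ nu A + nu B)) := by
  constructor
  · intro h4
    constructor
    · obtain ⟨A, B, hA, hB, h1, h2, h3⟩ := existence_gen hn
      exact ⟨A, B, hA, hB, h1, h2, by omega⟩
    · intro A B hA hB h1 h2
      have := lower_bound_main hn hA hB h1 h2
      rw [if_neg h4] at this
      omega
  · intro h4
    subst h4
    constructor
    · obtain ⟨A, B, hA, hB, h1, h2, h3⟩ := existence4
      exact ⟨A, B, hA, hB, h1, h2, by omega⟩
    · intro A B hA hB h1 h2
      have := lower_bound_main (by omega) hA hB h1 h2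
      rw [if_pos rfl] at this
      omega
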